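/- Fix n ≥ 2 and p > 0. For each natural K, let a k = 10^(-K) and b k = 10^(-2K) for k < n-1, and a (n-1) = b (n-1) = 1. Then as K → ∞, ((∑ k, (a k)^p)/(∑ k, (b k)^p))^(1/p) tends to 1 while ∑ k, (a k)/(b k) = (n-1)·10^K + 1 tends to +∞. -/

import Mathlib

open Filter Finset

lemma sum_ite_aux (n : ℕ) (hn : 2 ≤ n) (c d : ℝ) :
    ∑ k : Fin n, (if (k : ℕ) < n - 1 then c else d) = (n - 1 : ℝ) * c + d := by
  have h1 : (Finset.univ.filter fun k : Fin n => ¬ (k : ℕ) < n - 1)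
      = {(⟨n - 1, by omega⟩ : Fin n)} := by
    ext k
    simp only [Finset.mem_filter, Finset.mem_univ, true_and, Finset.mem_singleton, not_lt]
    constructor
    · intro h; have := k.isLt; exact Fin.ext (by simp; omega)
    · intro h; subst h; simp
  have h2 : (Finset.univ.filter fun k : Fin n => (k : ℕ) < n - 1).card = n - 1 := by
    have := Finset.card_filter_add_card_filter_not
      (s := (Finset.univ : Finset (Fin n))) (p := fun k : Fin n => (k : ℕ) < n - 1)
    rw [h1] at this
    simp at this
    omega
  rw [Finset.sum_ite, Finset.sum_const, Finset.sum_const, h1, h2]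
  simp [nsmul_eq_mul]
  have : ((n - 1 : ℕ) : ℝ) = (n : ℝ) - 1 := by
    push_cast [Nat.cast_sub (by omega : 1 ≤ n)]; ring
  rw [this]
  left; rfl

theorem stmt_17 (n : ℕ) (hn : 2 ≤ n) (p : ℝ) (hp : 0 < p)
    (a b : ℕ → Fin n → ℝ)
    (hadef : ∀ K, ∀ k : Fin n,
      a K k = if (k : ℕ) < n - 1 then (10 : ℝ) ^ (-(K : ℝ)) else 1)
    (hbdef : ∀ K, ∀ k : Fin n,
      b K k = if (k : ℕ) < n - 1 then (10 : ℝ) ^ (-(2 * K : ℝ)) else 1) :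
    Filter.Tendsto
      (fun K : ℕ => ((∑ k, (a K k) ^ p) / (∑ k, (b K k) ^ p)) ^ (1 / p))
      Filter.atTop (nhds 1) ∧
    Filter.Tendsto (fun K : ℕ => ∑ k, a K k / b K k) Filter.atTop Filter.atTop ∧
    ∀ K : ℕ, ∑ k, a K k / b K k = (n - 1 : ℝ) * (10 : ℝ) ^ (K : ℝ) + 1 := by
  have hA : ∀ K : ℕ, ∑ k, (a K k) ^ p = (n - 1 : ℝ) * (10 : ℝ) ^ (-(K : ℝ) * p) + 1 := by
    intro K
    rw [← sum_ite_aux n hn ((10 : ℝ) ^ (-(K : ℝ) * p)) 1]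
    refine Finset.sum_congr rfl fun k _ => ?_
    rw [hadef]
    split
    · rw [← Real.rpow_mul (by norm_num : (0:ℝ) ≤ 10)]
    · exact Real.one_rpow p
  have hB : ∀ K : ℕ, ∑ k, (b K k) ^ p = (n - 1 : ℝ) * (10 : ℝ) ^ (-(2 * K : ℝ) * p) + 1 := by
    intro K
    rw [← sum_ite_aux n hn ((10 : ℝ) ^ (-(2 * K : ℝ) * p)) 1]
    refine Finset.sum_congr rfl fun k _ => ?_
    rw [hbdef]
    split
    · rw [← Real.rpow_mul (by norm_num : (0:ℝ) ≤ 10)]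
    · exact Real.one_rpow p
  have hC : ∀ K : ℕ, ∑ k, a K k / b K k = (n - 1 : ℝ) * (10 : ℝ) ^ (K : ℝ) + 1 := by
    intro K
    rw [← sum_ite_aux n hn ((10 : ℝ) ^ (K : ℝ)) 1]
    refine Finset.sum_congr rfl fun k _ => ?_
    rw [hadef, hbdef]
    split
    · rw [← Real.rpow_sub (by norm_num : (0:ℝ) < 10)]
      congr 1; ring
    · norm_num
  -- generic zero limit
  have hzero : ∀ q : ℝ, 0 < q → Tendsto (fun K : ℕ => (10 : ℝ) ^ (-(K : ℝ) * q))
      atTop (nhds 0) := by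
    intro q hq
    have h0 : Tendsto (fun K : ℕ => ((10 : ℝ) ^ (-q)) ^ K) atTop (nhds 0) := by
      refine tendsto_pow_atTop_nhds_zero_of_lt_one
        (le_of_lt (Real.rpow_pos_of_pos (by norm_num) _)) ?_
      exact Real.rpow_lt_one_of_one_lt_of_neg (by norm_num) (by linarith)
    refine h0.congr fun K => ?_
    rw [← Real.rpow_natCast ((10:ℝ) ^ (-q)) K, ← Real.rpow_mul (by norm_num : (0:ℝ) ≤ 10)]
    congr 1; ring
  refine ⟨?_, ?_, hC⟩
  · have h1 : Tendsto (fun K : ℕ => (∑ k, (a K k) ^ p) / (∑ k, (b K k) ^ p))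
        atTop (nhds 1) := by
      have hnum : Tendsto (fun K : ℕ => ∑ k, (a K k) ^ p) atTop (nhds 1) := by
        have := ((hzero p hp).const_mul ((n : ℝ) - 1)).add_const 1
        simp only [mul_zero, zero_add] at this
        refine this.congr fun K => ?_
        rw [hA]
      have hden : Tendsto (fun K : ℕ => ∑ k, (b K k) ^ p) atTop (nhds 1) := by
        have h2p : Tendsto (fun K : ℕ => (10 : ℝ) ^ (-(2 * K : ℝ) * p)) atTop (nhds 0) := by
          refine (hzero (2 * p) (by linarith)).congr fun K => ?_
          congr 1; ring
        have := (h2p.const_mul ((n : ℝ) - 1)).add_const 1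
        simp only [mul_zero, zero_add] at this
        refine this.congr fun K => ?_
        rw [hB]
      have := hnum.div hden one_ne_zero
      simp only [div_one] at this
      exact this
    have := h1.rpow_const (p := 1 / p) (Or.inl one_ne_zero)
    simpa using this
  · have h10 : Tendsto (fun K : ℕ => (10 : ℝ) ^ (K : ℝ)) atTop atTop := by
      refine (tendsto_pow_atTop_atTop_of_one_lt (by norm_num : (1:ℝ) < 10)).congr fun K => ?_
      rw [Real.rpow_natCast]
    have h2 : Tendsto (fun K : ℕ => (n - 1 : ℝ) * (10 : ℝ) ^ (K : ℝ)) atTop atTop := by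
      refine Tendsto.const_mul_atTop ?_ h10
      have : (2 : ℝ) ≤ (n : ℝ) := by exact_mod_cast hn
      linarith
    have h3 := h2.atTop_add (tendsto_const_nhds (x := (1:ℝ)))
    refine h3.congr fun K => ?_
    rw [hC]
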